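/- Let $U$ be a unitary operator on a finite-dimensional Hilbert space and suppose unit vectors $a,b$ satisfy $Ua=\nu_1 b$ and $Ub=\nu_2 a+(\nu_1-\nu_2)\lambda b$ with $|\nu_1|=|\nu_2|=1$, $\lambda\in\mathbb{R}$, $\lambda\neq\pm1$, and $\langle a,b\rangle=\lambda$. Then the restriction of $U$ to $\mathrm{Span}(a,b)$ has eigenvalues $\mu_{\pm}$ which are exactly the two roots of $\mu^2-(\nu_1-\nu_2)\lambda\mu-\nu_1\nu_2=0$, with eigenvectors $\nu_2 a+\mu_\pm b$. -/

import Mathlib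

theorem stmt_9 {E : Type*} [NormedAddCommGroup E] [InnerProductSpace ℂ E]
    [FiniteDimensional ℂ E]
    (U : E →ₗ[ℂ] E) (hUiso : ∀ v w : E, (inner ℂ (U v) (U w) : ℂ) = inner ℂ v w)
    (a b : E) (ha : ‖a‖ = 1) (hb : ‖b‖ = 1)
    (ν₁ ν₂ : ℂ) (hν₁ : ‖ν₁‖ = 1) (hν₂ : ‖ν₂‖ = 1)
    (lam : ℝ) (hlam : lam ≠ 1) (hlam' : lam ≠ -1)
    (hab : (inner ℂ a b : ℂ) = (lam : ℂ))
    (hUa : U a = ν₁ • b)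
    (hUb : U b = ν₂ • a + ((ν₁ - ν₂) * (lam : ℂ)) • b) :
    (∀ μ : ℂ, μ ^ 2 - (ν₁ - ν₂) * (lam : ℂ) * μ - ν₁ * ν₂ = 0 →
      ν₂ • a + μ • b ≠ 0 ∧ U (ν₂ • a + μ • b) = μ • (ν₂ • a + μ • b)) ∧
    (∀ (μ : ℂ) (v : E), v ∈ Submodule.span ℂ ({a, b} : Set E) → v ≠ 0 →
      U v = μ • v → μ ^ 2 - (ν₁ - ν₂) * (lam : ℂ) * μ - ν₁ * ν₂ = 0) := by
  have hν₁0 : ν₁ ≠ 0 := fun h => by simp [h] at hν₁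
  have hν₂0 : ν₂ ≠ 0 := fun h => by simp [h] at hν₂
  have hba : (inner ℂ b a : ℂ) = (lam : ℂ) := by
    rw [← inner_conj_symm, hab]; simp
  have hl2 : (1 - lam ^ 2 : ℝ) ≠ 0 := by
    intro h
    have h' : (lam - 1) * (lam + 1) = 0 := by linear_combination -h
    rcases mul_eq_zero.mp h' with h1 | h1
    · exact hlam (by linarith)
    · exact hlam' (by linarith)
  have hl2' : (1 : ℂ) - (lam : ℂ) ^ 2 ≠ 0 := by
    have : ((1 - lam ^ 2 : ℝ) : ℂ) ≠ 0 := by exact_mod_cast hl2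
    convert this using 1; push_cast; ring
  have hindep : ∀ s t : ℂ, s • a + t • b = 0 → s = 0 ∧ t = 0 := by
    intro s t hst
    have h1 : (inner ℂ a (s • a + t • b) : ℂ) = 0 := by rw [hst, inner_zero_right]
    have h2 : (inner ℂ b (s • a + t • b) : ℂ) = 0 := by rw [hst, inner_zero_right]
    simp only [inner_add_right, inner_smul_right, hab, hba,
      inner_self_eq_norm_sq_to_K, ha, hb] at h1 h2
    norm_num at h1 h2
    have hs : s * (1 - (lam : ℂ) ^ 2) = 0 := by linear_combination h1 - (lam : ℂ) * h2
    have hs0 : s = 0 := by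
      rcases mul_eq_zero.mp hs with h | h
      · exact h
      · exact absurd h hl2'
    refine ⟨hs0, ?_⟩
    rw [hs0] at h2; simpa using h2
  constructor
  · intro μ hμ
    constructor
    · intro h
      rcases hindep _ _ h with ⟨h1, h2⟩
      exact hν₂0 h1
    · rw [map_add, map_smul, map_smul, hUa, hUb]
      match_scalars
      · linear_combination -hμ
      · ring1
  · intro μ v hv hv0 hUv
    rcases Submodule.mem_span_pair.mp hv with ⟨s, t, hst⟩
    have h := hUv
    rw [← hst, map_add, map_smul, map_smul, hUa, hUb] at h
    have key : (t * ν₂ - μ * s) • a + (s * ν₁ + t * ((ν₁ - ν₂) * (lam : ℂ)) - μ * t) • b = 0 := by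
      have h2 : (t * ν₂ - μ * s) • a + (s * ν₁ + t * ((ν₁ - ν₂) * (lam : ℂ)) - μ * t) • b
          = (s • (ν₁ • b) + t • (ν₂ • a + ((ν₁ - ν₂) * (lam : ℂ)) • b)) - μ • (s • a + t • b) := by
        module
      rw [h2, h, sub_self]
    rcases hindep _ _ key with ⟨eq1, eq2⟩
    have ht : t ≠ 0 := by
      intro ht0
      rw [ht0] at eq1 eq2
      simp only [zero_mul, mul_zero, zero_sub, neg_eq_zero, sub_zero, add_zero] at eq1 eq2
      have hs0 : s = 0 := by
        rcases mul_eq_zero.mp eq2 with h | h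
        · exact h
        · exact absurd h hν₁0
      apply hv0
      rw [← hst, hs0, ht0]; simp
    have hq : (μ ^ 2 - (ν₁ - ν₂) * (lam : ℂ) * μ - ν₁ * ν₂) * t = 0 := by
      linear_combination (-ν₁) * eq1 - μ * eq2
    rcases mul_eq_zero.mp hq with h | h
    · exact h
    · exact absurd h ht
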